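/- Let R be a commutative ring with 2 invertible, V = R^{n+1} with e, e*, e*e = 1, and τ ∈ Mat_{n+1}(R) stable. If x ∈ End(V) commutes with τ and x is not a scalar (x ∉ R·1), then the commutator [x, 1_H] does not lie in M_H(R) + M_τ(R), where 1_H = 1 − ee*, M_H(R) consists of endomorphisms preserving the decomposition and killing e (i.e., of the form 1_H m 1_H), and M_τ(R) is the centralizer of τ. -/

import Mathlib

section MatGGP

variable {S : Type*} [CommRing S] {m : ℕ}

/-- `v` is a cyclic vector for the matrix `τ`: `S[τ] v` is everything. -/
def MatCyclicVec (τ : Matrix (Fin m) (Fin m) S) (v : Fin m → S) : Prop :=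
  ∀ w : Fin m → S, ∃ p : Polynomial S, (Polynomial.aeval τ p).mulVec v = w

/-- `ℓ` is a cyclic covector for the matrix `τ`: `ℓ S[τ]` is everything. -/
def MatCoCyclicVec (τ : Matrix (Fin m) (Fin m) S) (ℓ : Fin m → S) : Prop :=
  ∀ w : Fin m → S, ∃ p : Polynomial S, Matrix.vecMul ℓ (Polynomial.aeval τ p) = w

/-- `τ` is stable with respect to `(e, e*)`: both `e` and `e*` are `τ`-cyclic. -/
def MatStable (τ : Matrix (Fin m) (Fin m) S) (e eStar : Fin m → S) : Prop :=
  MatCyclicVec τ e ∧ MatCoCyclicVec τ eStar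

/-- The projection matrix `1_H = 1 - e e*`. -/
def oneHMat (e eStar : Fin m → S) : Matrix (Fin m) (Fin m) S :=
  1 - Matrix.vecMulVec e eStar

/-- The compression `τ_H = 1_H τ 1_H`. -/
def tauHMat (τ : Matrix (Fin m) (Fin m) S) (e eStar : Fin m → S) :
    Matrix (Fin m) (Fin m) S :=
  oneHMat e eStar * τ * oneHMat e eStar

/-- Membership in `H(S)`: an invertible matrix fixing `e` and `e*`. -/
def MemH (e eStar : Fin m → S) (g : Matrix (Fin m) (Fin m) S) : Prop :=
  IsUnit g ∧ g.mulVec e = e ∧ Matrix.vecMul eStar g = eStar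

/-- Membership in the product set `H(S) · G_τ(S)`. -/
def MemHGt (τ : Matrix (Fin m) (Fin m) S) (e eStar : Fin m → S)
    (a : Matrix (Fin m) (Fin m) S) : Prop :=
  ∃ h b : Matrix (Fin m) (Fin m) S,
    MemH e eStar h ∧ IsUnit b ∧ b * τ = τ * b ∧ a = h * b

/-- Membership in `H_{τ_H}(S)`: an element of `H(S)` commuting with the compression `τ_H`. -/
def MemHtauH (τ : Matrix (Fin m) (Fin m) S) (e eStar : Fin m → S)
    (y : Matrix (Fin m) (Fin m) S) : Prop :=
  MemH e eStar y ∧ y * tauHMat τ e eStar = tauHMat τ e eStar * y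

end MatGGP

/-- Let `R` be a commutative ring with `2` invertible and `τ ∈ Mat_{n+1}(R)` stable.  If `x`
commutes with `τ` and is not scalar, then the commutator `[x, 1_H]` does not lie in
`M_H(R) + M_τ(R)`, where `M_H(R)` consists of the operators killing `e` and `e*` (i.e. of the
form `1_H m 1_H`) and `M_τ(R)` is the centralizer of `τ`. -/

private lemma vmv_mulVec {S : Type*} [CommRing S] {m : ℕ} (e f v : Fin m → S) :
    (Matrix.vecMulVec e f).mulVec v = (dotProduct f v) • e := by
  funext i
  simp only [Matrix.mulVec, Matrix.vecMulVec_apply, dotProduct, Pi.smul_apply,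
    smul_eq_mul, Finset.sum_mul, Finset.mul_sum]
  exact Finset.sum_congr rfl fun j _ => by ring

private lemma vecMul_vmv {S : Type*} [CommRing S] {m : ℕ} (w e f : Fin m → S) :
    Matrix.vecMul w (Matrix.vecMulVec e f) = (dotProduct w e) • f := by
  funext j
  simp only [Matrix.vecMul, Matrix.vecMulVec_apply, dotProduct, Pi.smul_apply,
    smul_eq_mul, Finset.sum_mul, Finset.mul_sum]
  exact Finset.sum_congr rfl fun i _ => by ring

private lemma vecMul_smul_mat {S : Type*} [CommRing S] {m : ℕ} (w : Fin m → S) (a : S)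
    (M : Matrix (Fin m) (Fin m) S) :
    Matrix.vecMul w (a • M) = a • Matrix.vecMul w M := by
  funext j
  simp only [Matrix.vecMul, dotProduct, Matrix.smul_apply, Pi.smul_apply, smul_eq_mul,
    Finset.mul_sum]
  exact Finset.sum_congr rfl fun i _ => by ring

private lemma comm_aeval {S : Type*} [CommRing S] {m : ℕ}
    {y τ : Matrix (Fin m) (Fin m) S} (h : y * τ = τ * y) (p : Polynomial S) :
    y * Polynomial.aeval τ p = Polynomial.aeval τ p * y := by
  induction p using Polynomial.induction_on' with
  | add p q hp hq => simp only [map_add, mul_add, add_mul, hp, hq]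
  | monomial k a =>
      have hc : Commute y τ := h
      have hpk : Commute y (τ ^ k) := hc.pow_right k
      simp only [Polynomial.aeval_monomial]
      rw [← mul_assoc, (Algebra.commutes a y).symm, mul_assoc, hpk.eq, ← mul_assoc, mul_assoc]

theorem stmt_13 {R : Type*} [CommRing R] (n : ℕ) (h2 : IsUnit (2 : R))
    (e eStar : Fin (n + 1) → R) (he : dotProduct eStar e = 1)
    (τ : Matrix (Fin (n + 1)) (Fin (n + 1)) R) (hτ : MatStable τ e eStar)
    (x : Matrix (Fin (n + 1)) (Fin (n + 1)) R) (hx : x * τ = τ * x)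
    (hxns : ¬ ∃ c : R, x = c • (1 : Matrix (Fin (n + 1)) (Fin (n + 1)) R)) :
    ¬ ∃ mh t : Matrix (Fin (n + 1)) (Fin (n + 1)) R,
      mh.mulVec e = 0 ∧ Matrix.vecMul eStar mh = 0 ∧ t * τ = τ * t ∧
      x * oneHMat e eStar - oneHMat e eStar * x = mh + t := by
  rintro ⟨mh, t, hmhe, hemh, ht, heq⟩
  set c : R := dotProduct eStar (x.mulVec e) with hc
  set y : Matrix (Fin (n+1)) (Fin (n+1)) R := x - c • 1 with hy
  have hyτ : y * τ = τ * y := by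
    simp only [hy, sub_mul, mul_sub, hx, Matrix.smul_mul, Matrix.mul_smul, one_mul, mul_one]
  have honee : (oneHMat e eStar).mulVec e = 0 := by
    simp [oneHMat, Matrix.sub_mulVec, vmv_mulVec, he]
  have heone : Matrix.vecMul eStar (oneHMat e eStar) = 0 := by
    simp [oneHMat, Matrix.vecMul_sub, vecMul_vmv, he]
  have hone_x : (oneHMat e eStar).mulVec (x.mulVec e) = x.mulVec e - c • e := by
    simp only [oneHMat, Matrix.sub_mulVec, Matrix.one_mulVec, vmv_mulVec]
    rfl
  have hymve : y.mulVec e = x.mulVec e - c • e := by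
    simp only [hy, Matrix.sub_mulVec, Matrix.smul_mulVec, Matrix.one_mulVec]
  -- apply to e
  have hte : t.mulVec e = -(y.mulVec e) := by
    have h := congrArg (fun M => Matrix.mulVec M e) heq
    simp only [Matrix.sub_mulVec, Matrix.add_mulVec, hmhe, zero_add] at h
    rw [← Matrix.mulVec_mulVec, ← Matrix.mulVec_mulVec, honee, Matrix.mulVec_zero] at h
    rw [← h, hone_x, hymve, zero_sub]
  -- apply eStar
  have hone_ex : Matrix.vecMul (Matrix.vecMul eStar x) (oneHMat e eStar)
      = Matrix.vecMul eStar x - c • eStar := by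
    simp only [oneHMat, Matrix.vecMul_sub, Matrix.vecMul_one, vecMul_vmv]
    rw [← Matrix.dotProduct_mulVec, ← hc]
  have heymv : Matrix.vecMul eStar y = Matrix.vecMul eStar x - c • eStar := by
    simp only [hy, Matrix.vecMul_sub, vecMul_smul_mat, Matrix.vecMul_one]
  have hety : Matrix.vecMul eStar t = Matrix.vecMul eStar y := by
    have h := congrArg (fun M => Matrix.vecMul eStar M) heq
    simp only [Matrix.vecMul_sub, Matrix.vecMul_add, hemh, zero_add] at h
    rw [← Matrix.vecMul_vecMul, ← Matrix.vecMul_vecMul, heone, Matrix.zero_vecMul,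
      sub_zero] at h
    rw [← h, hone_ex, heymv]
  -- t + y kills e and commutes with τ, hence t + y = 0
  have htyτ : (t + y) * τ = τ * (t + y) := by
    simp only [add_mul, mul_add, ht, hyτ]
  have htye : (t + y).mulVec e = 0 := by
    simp [Matrix.add_mulVec, hte]
  have hty0 : t + y = 0 := by
    have hall : ∀ w : Fin (n+1) → R, (t + y).mulVec w = 0 := by
      intro w
      obtain ⟨p, hp⟩ := hτ.1 w
      rw [← hp, Matrix.mulVec_mulVec, comm_aeval htyτ p, ← Matrix.mulVec_mulVec, htye,
        Matrix.mulVec_zero]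
    ext i j
    have h := congrFun (hall (Pi.single j 1)) i
    simpa using h
  have htny : t = -y := by linear_combination (norm := abel) hty0
  have h2y : Matrix.vecMul eStar y = 0 := by
    have h1 : -(Matrix.vecMul eStar y) = Matrix.vecMul eStar y := by
      rw [← Matrix.vecMul_neg, ← htny, hety]
    have hsm : (2 : R) • Matrix.vecMul eStar y = 0 := by
      funext j
      have h := congrFun h1 j
      simp only [Pi.neg_apply] at h
      simp only [Pi.smul_apply, smul_eq_mul, Pi.zero_apply]
      linear_combination -h
    funext j
    have h := congrFun hsm j
    simp only [Pi.smul_apply, smul_eq_mul, Pi.zero_apply] at h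
    exact (IsUnit.mul_right_eq_zero h2).mp h
  -- cocyclic: y = 0
  have hy0 : y = 0 := by
    have hall : ∀ w : Fin (n+1) → R, Matrix.vecMul w y = 0 := by
      intro w
      obtain ⟨p, hp⟩ := hτ.2 w
      rw [← hp, Matrix.vecMul_vecMul, ← comm_aeval hyτ p, ← Matrix.vecMul_vecMul, h2y,
        Matrix.zero_vecMul]
    ext i j
    have h := congrFun (hall (Pi.single i 1)) j
    simpa using h
  exact hxns ⟨c, by rw [← sub_eq_zero]; exact hy ▸ hy0⟩
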